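/- Let f: R^d → R be self-concordant with minimizer x_* and H_* = ∇²f(x_*), and write H_x = ∇²f(x). If ‖x − x_*‖_* < 1, then ‖H_x − H_*‖²_{F(H_*⁻¹)} ≤ d · ‖x − x_*‖_*² · ((2 − ‖x − x_*‖_*)/(1 − ‖x − x_*‖_*)²)². -/

import Mathlib

open Matrix MeasureTheory Filter
open scoped Classical

noncomputable section

/-- Vectors in `ℝ^d` with the Euclidean (2-)norm. -/
abbrev Vec (d : ℕ) := EuclideanSpace ℝ (Fin d)

/-- Matrix square root of a positive semidefinite matrix (junk value `0` otherwise). -/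
noncomputable def msqrt {d : ℕ} (M : Matrix (Fin d) (Fin d) ℝ) : Matrix (Fin d) (Fin d) ℝ :=
  if h : M.PosSemidef then
    h.1.eigenvectorUnitary.1 * diagonal ((RCLike.ofReal (K := ℝ)) ∘ Real.sqrt ∘ h.1.eigenvalues) *
      (star h.1.eigenvectorUnitary : Matrix (Fin d) (Fin d) ℝ)
  else 0

/-- Frobenius norm of a square matrix. -/
noncomputable def frobNorm {d : ℕ} (M : Matrix (Fin d) (Fin d) ℝ) : ℝ :=
  Real.sqrt (Matrix.trace (Mᵀ * M))

/-- Weighted Frobenius norm `‖W‖_{F(H)} = ‖H^{1/2} W H^{1/2}‖_F`. -/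
noncomputable def wFrob {d : ℕ} (H W : Matrix (Fin d) (Fin d) ℝ) : ℝ :=
  frobNorm (msqrt H * W * msqrt H)

/-- Local norm `‖v‖_H = √⟨H v, v⟩`. -/
noncomputable def localNorm {d : ℕ} (H : Matrix (Fin d) (Fin d) ℝ) (v : Vec d) : ℝ :=
  Real.sqrt (inner ℝ (Matrix.toEuclideanLin H v) v : ℝ)

/-- `f` is self-concordant, expressed through its Hessian map `Hf`:
the Hessian is everywhere positive definite and the local norms at nearby points are
comparable. -/
def SelfConcordant {d : ℕ} (Hf : Vec d → Matrix (Fin d) (Fin d) ℝ) : Prop :=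
  (∀ x, (Hf x).PosDef) ∧
  ∀ x y v : Vec d, localNorm (Hf x) (y - x) < 1 → v ≠ 0 →
    1 - localNorm (Hf x) (y - x) ≤ localNorm (Hf y) v / localNorm (Hf x) v ∧
      localNorm (Hf y) v / localNorm (Hf x) v ≤ 1 / (1 - localNorm (Hf x) (y - x))

/-- `g` is the gradient of `f` and `Hf` is its Hessian (the derivative of the gradient). -/
def IsGradHess {d : ℕ} (f : Vec d → ℝ) (g : Vec d → Vec d)
    (Hf : Vec d → Matrix (Fin d) (Fin d) ℝ) : Prop :=
  (∀ x, HasGradientAt f (g x) x) ∧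
  ∀ x, HasFDerivAt g (Matrix.toEuclideanCLM (𝕜 := ℝ) (Hf x) : Vec d →L[ℝ] Vec d) x

/-- Smallest eigenvalue of a symmetric matrix, via the Rayleigh quotient. -/
noncomputable def lambdaMin {d : ℕ} (M : Matrix (Fin d) (Fin d) ℝ) : ℝ :=
  ⨅ v : {v : Vec d // ‖v‖ = 1}, (inner ℝ (Matrix.toEuclideanLin M v.1) v.1 : ℝ)

/-- Entrywise expectation of a random matrix. -/
noncomputable def expMat {Ω : Type*} [MeasurableSpace Ω] (μ : Measure Ω)
    {m n : ℕ} (M : Ω → Matrix (Fin m) (Fin n) ℝ) : Matrix (Fin m) (Fin n) ℝ :=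
  Matrix.of fun i j => ∫ ω, M ω i j ∂μ

/-- The projection matrix `Z = H^{1/2} S (Sᵀ H S)⁻¹ Sᵀ H^{1/2}`. -/
noncomputable def sketchProj {d τ : ℕ} (H : Matrix (Fin d) (Fin d) ℝ)
    (S : Matrix (Fin d) (Fin τ) ℝ) : Matrix (Fin d) (Fin d) ℝ :=
  msqrt H * S * (Sᵀ * H * S)⁻¹ * Sᵀ * msqrt H

/-- The (randomized) BFGS update
`BFGS(B, H, S) = G + (I - G H) B (I - H G)` with `G = S (Sᵀ H S)⁻¹ Sᵀ`. -/
noncomputable def bfgsUpdate {d τ : ℕ} (B H : Matrix (Fin d) (Fin d) ℝ)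
    (S : Matrix (Fin d) (Fin τ) ℝ) : Matrix (Fin d) (Fin d) ℝ :=
  S * (Sᵀ * H * S)⁻¹ * Sᵀ +
    (1 - S * (Sᵀ * H * S)⁻¹ * Sᵀ * H) * B * (1 - H * (S * (Sᵀ * H * S)⁻¹ * Sᵀ))

/-- Spectral (operator 2-)norm of a matrix. -/
noncomputable def opNorm2 {d : ℕ} (M : Matrix (Fin d) (Fin d) ℝ) : ℝ :=
  ‖(Matrix.toEuclideanCLM (𝕜 := ℝ) M : Vec d →L[ℝ] Vec d)‖

instance matrixMeasurableSpace {m n : Type*} : MeasurableSpace (Matrix m n ℝ) :=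
  MeasurableSpace.pi

/-- The sketching matrices `S k` are i.i.d. samples from a common distribution `D`. -/
def IIDSketch {d τ : ℕ} {Ω : Type*} [MeasurableSpace Ω] (μ : Measure Ω)
    (S : ℕ → Ω → Matrix (Fin d) (Fin τ) ℝ) : Prop :=
  (∀ k, Measurable (S k)) ∧
  ProbabilityTheory.iIndepFun (m := fun _ => matrixMeasurableSpace) S μ ∧
  ∀ k, Measure.map (S k) μ = Measure.map (S 0) μ

end

noncomputable section Aux

open Matrix

/-- localNorm in terms of dotProduct. -/
lemma localNorm_eq_dot {d : ℕ} (H : Matrix (Fin d) (Fin d) ℝ) (v : Fin d → ℝ) :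
    localNorm H ((WithLp.equiv 2 _).symm v) = Real.sqrt (v ⬝ᵥ (H *ᵥ v)) := by
  unfold localNorm
  congr 1

lemma trace_sq_eq {d : ℕ} {A : Matrix (Fin d) (Fin d) ℝ} (hA : A.IsHermitian) :
    Matrix.trace (Aᵀ * A) = ∑ i, hA.eigenvalues i ^ 2 := by
  have hAt : Aᵀ = A := by rwa [← conjTranspose_eq_transpose_of_trivial]
  set U : Matrix (Fin d) (Fin d) ℝ := (hA.eigenvectorUnitary : Matrix (Fin d) (Fin d) ℝ) with hU
  set D : Matrix (Fin d) (Fin d) ℝ := diagonal (RCLike.ofReal ∘ hA.eigenvalues) with hD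
  have hUu : star U * U = 1 := by simp [hU, Unitary.star_mul_self hA.eigenvectorUnitary]
  have hspec : A = U * D * star U := by
    conv_lhs => rw [hA.spectral_theorem]
    rfl
  rw [hAt]
  conv_lhs => rw [hspec]
  rw [show U * D * star U * (U * D * star U) = U * (D * (star U * U) * D) * star U by
    noncomm_ring, hUu, mul_one, Matrix.trace_mul_cycle, ← mul_assoc, hUu, one_mul]
  simp [hD, diagonal_mul_diagonal, Matrix.trace_diagonal, pow_two]

lemma eig_abs_le {d : ℕ} {A : Matrix (Fin d) (Fin d) ℝ} (hA : A.IsHermitian) (c : ℝ)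
    (h : ∀ w : Fin d → ℝ, |w ⬝ᵥ (A *ᵥ w)| ≤ c * (w ⬝ᵥ w)) (i : Fin d) :
    |hA.eigenvalues i| ≤ c := by
  have h1 : ‖hA.eigenvectorBasis i‖ = 1 := hA.eigenvectorBasis.orthonormal.1 i
  have h2 : (⇑(hA.eigenvectorBasis i)) ⬝ᵥ (⇑(hA.eigenvectorBasis i)) = 1 := by
    have := real_inner_self_eq_norm_sq (hA.eigenvectorBasis i)
    rw [h1, one_pow] at this
    rw [EuclideanSpace.inner_eq_star_dotProduct] at this
    simpa [dotProduct] using this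
  have h4 : hA.eigenvalues i = (⇑(hA.eigenvectorBasis i)) ⬝ᵥ (A *ᵥ ⇑(hA.eigenvectorBasis i)) := by
    simpa using hA.eigenvalues_eq i
  rw [h4]
  simpa [h2] using h (⇑(hA.eigenvectorBasis i))

lemma msqrt_facts {d : ℕ} {M : Matrix (Fin d) (Fin d) ℝ} (h : M.PosSemidef) :
    (msqrt M)ᵀ = msqrt M ∧ msqrt M * msqrt M = M := by
  rw [msqrt, dif_pos h]
  set U : Matrix (Fin d) (Fin d) ℝ := (h.1.eigenvectorUnitary : Matrix (Fin d) (Fin d) ℝ) with hU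
  set D : Matrix (Fin d) (Fin d) ℝ :=
    diagonal ((RCLike.ofReal (K := ℝ)) ∘ Real.sqrt ∘ h.1.eigenvalues) with hD
  have hUu : star U * U = 1 := by simp [hU, Unitary.star_mul_self h.1.eigenvectorUnitary]
  have hsU : star U = Uᵀ := by rw [star_eq_conjTranspose, conjTranspose_eq_transpose_of_trivial]
  constructor
  · rw [hsU, Matrix.transpose_mul, Matrix.transpose_mul, Matrix.transpose_transpose, hD,
      Matrix.diagonal_transpose, mul_assoc]
  · have hspec : M = U * diagonal (RCLike.ofReal ∘ h.1.eigenvalues) * star U := by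
      conv_lhs => rw [h.1.spectral_theorem]
      rfl
    have hDD : D * D = diagonal (RCLike.ofReal ∘ h.1.eigenvalues) := by
      rw [hD, diagonal_mul_diagonal]
      congr 1
      funext i
      have := h.eigenvalues_nonneg i
      simp [Real.mul_self_sqrt this]
    conv_rhs => rw [hspec]
    rw [show U * D * star U * (U * D * star U) = U * (D * (star U * U) * D) * star U by
      noncomm_ring, hUu, mul_one, hDD]

end Aux

/-- **Hessian distance bound in the `F(H_*⁻¹)` norm for self-concordant `f`.** -/
theorem hessian_distance_bound_self_concordant
    {d : ℕ} (f : Vec d → ℝ) (g : Vec d → Vec d) (Hf : Vec d → Matrix (Fin d) (Fin d) ℝ)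
    (hfgH : IsGradHess f g Hf) (hsc : SelfConcordant Hf)
    (xstar : Vec d) (hmin : ∀ y, f xstar ≤ f y)
    (x : Vec d) (hx : localNorm (Hf xstar) (x - xstar) < 1) :
    wFrob (Hf xstar)⁻¹ (Hf x - Hf xstar) ^ 2 ≤
      d * localNorm (Hf xstar) (x - xstar) ^ 2 *
        ((2 - localNorm (Hf xstar) (x - xstar)) /
          (1 - localNorm (Hf xstar) (x - xstar)) ^ 2) ^ 2 := by
  classical
  set r := localNorm (Hf xstar) (x - xstar) with hrdef
  have hr0 : 0 ≤ r := Real.sqrt_nonneg _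
  have hr1 : (0:ℝ) < 1 - r := by linarith
  set c : ℝ := r * (2 - r) / (1 - r) ^ 2 with hcdef
  have hc0 : 0 ≤ c := by
    apply div_nonneg
    · nlinarith
    · positivity
  have hceq : c * (1 - r) ^ 2 = r * (2 - r) := by
    rw [hcdef, div_mul_cancel₀ _ (pow_ne_zero 2 hr1.ne')]
  -- positive definiteness facts
  have hstar : (Hf xstar).PosDef := hsc.1 xstar
  have hxpd : (Hf x).PosDef := hsc.1 x
  -- quadratic form comparison from self-concordance
  have hquad : ∀ v : Fin d → ℝ,
      |v ⬝ᵥ ((Hf x - Hf xstar) *ᵥ v)| ≤ c * (v ⬝ᵥ (Hf xstar *ᵥ v)) := by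
    intro v
    by_cases hv : v = 0
    · simp [hv]
    · have hv' : ((WithLp.equiv 2 (Fin d → ℝ)).symm v : Vec d) ≠ 0 := by
        simpa using hv
      obtain ⟨h1, h2⟩ := hsc.2 xstar x ((WithLp.equiv 2 (Fin d → ℝ)).symm v) hx hv'
      rw [localNorm_eq_dot, localNorm_eq_dot] at h1 h2
      set s := v ⬝ᵥ (Hf x *ᵥ v) with hs
      set t := v ⬝ᵥ (Hf xstar *ᵥ v) with ht
      have hspos : 0 < s := by
        have := hxpd.dotProduct_mulVec_pos hv
        simpa [hs] using this
      have htpos : 0 < t := by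
        have := hstar.dotProduct_mulVec_pos hv
        simpa [ht] using this
      have hsq : Real.sqrt s * Real.sqrt s = s := Real.mul_self_sqrt hspos.le
      have htq : Real.sqrt t * Real.sqrt t = t := Real.mul_self_sqrt htpos.le
      have hstp : 0 < Real.sqrt t := Real.sqrt_pos.mpr htpos
      have hssp : 0 < Real.sqrt s := Real.sqrt_pos.mpr hspos
      -- from h1 : 1 - r ≤ √s / √t
      have hlow : (1 - r) ^ 2 * t ≤ s := by
        have h1' : (1 - r) * Real.sqrt t ≤ Real.sqrt s := by
          rw [le_div_iff₀ hstp] at h1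
          linarith
        have key := mul_le_mul h1' h1' (by positivity) hssp.le
        nlinarith [key]
      have hhigh : s * (1 - r) ^ 2 ≤ t := by
        have h2' : Real.sqrt s * (1 - r) ≤ Real.sqrt t := by
          rw [div_le_div_iff₀ hstp hr1] at h2
          linarith
        have key := mul_le_mul h2' h2' (by positivity) hstp.le
        nlinarith [key]
      have hdot : v ⬝ᵥ ((Hf x - Hf xstar) *ᵥ v) = s - t := by
        simp [Matrix.sub_mulVec, dotProduct_sub, hs, ht]
      rw [hdot, abs_le]
      constructor
      · -- -(c * t) ≤ s - t, i.e. t * (1 - c) ≤ s; use (1-r)^2 * t ≤ s and 1 - c ≤ (1-r)^2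
        have h1c : 1 - c ≤ (1 - r) ^ 2 := by nlinarith
        nlinarith
      · -- s - t ≤ c * t, i.e. s ≤ t * (1 + c) = t / (1-r)^2
        nlinarith
  -- matrix square root facts
  have hinv : ((Hf xstar)⁻¹).PosDef := hstar.inv
  set R : Matrix (Fin d) (Fin d) ℝ := msqrt (Hf xstar)⁻¹ with hRdef
  have hRR : R * R = (Hf xstar)⁻¹ := (msqrt_facts hinv.posSemidef).2
  have hRsym : Rᵀ = R := (msqrt_facts hinv.posSemidef).1
  have hRunit : IsUnit R.det := by
    have hdet : R.det * R.det = ((Hf xstar)⁻¹).det := by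
      rw [← Matrix.det_mul, hRR]
    have hpos : 0 < ((Hf xstar)⁻¹).det := hinv.det_pos
    have : R.det ≠ 0 := by
      intro h0
      rw [h0, mul_zero] at hdet
      exact hpos.ne (hdet)
    exact this.isUnit
  have hHunit : IsUnit (Hf xstar).det := hstar.det_pos.ne'.isUnit
  have hRHR : R * Hf xstar * R = 1 := by
    have hH : Hf xstar = R⁻¹ * R⁻¹ := by
      rw [← Matrix.mul_inv_rev, hRR, Matrix.nonsing_inv_nonsing_inv _ hHunit]
    rw [hH]
    rw [show R * (R⁻¹ * R⁻¹) * R = (R * R⁻¹) * (R⁻¹ * R) by noncomm_ring,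
      Matrix.mul_nonsing_inv _ hRunit, Matrix.nonsing_inv_mul _ hRunit, one_mul]
  -- A = R (Hx - H*) R
  set A : Matrix (Fin d) (Fin d) ℝ := R * (Hf x - Hf xstar) * R with hAdef
  have hdiffsym : (Hf x - Hf xstar)ᵀ = Hf x - Hf xstar := by
    have h1 := hxpd.1
    have h2 := hstar.1
    rw [Matrix.IsHermitian, conjTranspose_eq_transpose_of_trivial] at h1 h2
    rw [Matrix.transpose_sub, h1, h2]
  have hAt : Aᵀ = A := by
    rw [hAdef, Matrix.transpose_mul, Matrix.transpose_mul, hRsym, hdiffsym, mul_assoc]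
  have hA : A.IsHermitian := by
    rwa [Matrix.IsHermitian, conjTranspose_eq_transpose_of_trivial]
  -- quadratic form of A
  have hquadA : ∀ w : Fin d → ℝ, |w ⬝ᵥ (A *ᵥ w)| ≤ c * (w ⬝ᵥ w) := by
    intro w
    have e1 : w ⬝ᵥ (A *ᵥ w) = (R *ᵥ w) ⬝ᵥ ((Hf x - Hf xstar) *ᵥ (R *ᵥ w)) := by
      rw [hAdef, ← Matrix.mulVec_mulVec, ← Matrix.mulVec_mulVec, Matrix.dotProduct_mulVec,
        ← Matrix.mulVec_transpose, hRsym]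
    have e2 : w ⬝ᵥ w = (R *ᵥ w) ⬝ᵥ (Hf xstar *ᵥ (R *ᵥ w)) := by
      have h' : w ⬝ᵥ ((R * Hf xstar * R) *ᵥ w) = (R *ᵥ w) ⬝ᵥ (Hf xstar *ᵥ (R *ᵥ w)) := by
        rw [← Matrix.mulVec_mulVec, ← Matrix.mulVec_mulVec, Matrix.dotProduct_mulVec,
          ← Matrix.mulVec_transpose, hRsym]
      rw [← h', hRHR, Matrix.one_mulVec]
    rw [e1, e2]
    exact hquad (R *ᵥ w)
  -- eigenvalues and trace
  have heig : ∀ i, |hA.eigenvalues i| ≤ c := eig_abs_le hA c hquadA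
  have htr : Matrix.trace (Aᵀ * A) = ∑ i, hA.eigenvalues i ^ 2 := trace_sq_eq hA
  have htr_nonneg : (0:ℝ) ≤ Matrix.trace (Aᵀ * A) := by
    rw [htr]; positivity
  have hLHS : wFrob (Hf xstar)⁻¹ (Hf x - Hf xstar) ^ 2 = Matrix.trace (Aᵀ * A) := by
    simp only [wFrob, frobNorm]
    rw [← hRdef, ← hAdef, Real.sq_sqrt htr_nonneg]
  rw [hLHS, htr]
  have hsum : ∑ i, hA.eigenvalues i ^ 2 ≤ ∑ _i : Fin d, c ^ 2 := by
    apply Finset.sum_le_sum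
    intro i _
    have h := heig i
    nlinarith [sq_abs (hA.eigenvalues i), abs_nonneg (hA.eigenvalues i)]
  refine le_trans hsum ?_
  rw [Finset.sum_const, Finset.card_univ, Fintype.card_fin, nsmul_eq_mul]
  have hc2 : c ^ 2 = r ^ 2 * ((2 - r) / (1 - r) ^ 2) ^ 2 := by
    rw [hcdef]; ring
  rw [hc2]
  exact le_of_eq (by ring)
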